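/- If A_1, …, A_n is a semiorthogonal sequence of admissible subcategories of a triangulated category T (i.e. Hom_T(A_i, A_j) = 0 for i > j and each A_i is admissible), then the subcategory ⟨A_1, …, A_n⟩ is admissible and the mutation functors satisfy R_{⟨A_1, …, A_n⟩} = R_{A_n} ∘ … ∘ R_{A_1} and L_{⟨A_1, …, A_n⟩} = L_{A_1} ∘ … ∘ L_{A_n}. -/

import Mathlib

namespace HPD

open CategoryTheory Limits Pretriangulated

universe v u

variable {C : Type u} [Category.{v} C]

section Preadd
variable [Preadditive C]

/-- The right orthogonal to a set of objects. -/
def rightOrth (A : Set C) : Set C := {T : C | ∀ a ∈ A, ∀ f : a ⟶ T, f = 0}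

/-- The left orthogonal to a set of objects. -/
def leftOrth (A : Set C) : Set C := {T : C | ∀ a ∈ A, ∀ f : T ⟶ a, f = 0}

end Preadd

/-- The inclusion functor of the full subcategory on a set of objects. -/
abbrev incl (A : Set C) : ObjectProperty.FullSubcategory (fun X : C => X ∈ A) ⥤ C :=
  ObjectProperty.ι (P := _)

/-- A full subcategory is right admissible if its inclusion functor admits a right adjoint. -/
def RightAdmissible (A : Set C) : Prop := (incl A).IsLeftAdjoint

/-- A full subcategory is left admissible if its inclusion functor admits a left adjoint. -/
def LeftAdmissible (A : Set C) : Prop := (incl A).IsRightAdjoint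

/-- A full subcategory is admissible if it is both left and right admissible. -/
def Admissible (A : Set C) : Prop := RightAdmissible A ∧ LeftAdmissible A

section Triang

variable [HasZeroObject C] [Preadditive C] [HasShift C ℤ]
  [∀ n : ℤ, (shiftFunctor C n).Additive] [Pretriangulated C]

/-- A set of objects is a (strictly full) triangulated subcategory. -/
structure IsTriangulatedSub (A : Set C) : Prop where
  zero : ∀ X : C, IsZero X → X ∈ A
  isoClosed : ∀ ⦃X Y : C⦄, (X ≅ Y) → X ∈ A → Y ∈ A
  shift : ∀ (X : C) (n : ℤ), X ∈ A → X⟦n⟧ ∈ A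
  ext₂ : ∀ T : Triangle C, T ∈ (distTriang C) → T.obj₁ ∈ A → T.obj₃ ∈ A → T.obj₂ ∈ A

/-- The minimal strictly full triangulated subcategory containing a set of objects. -/
def triangulatedClosure (S : Set C) : Set C :=
  {X : C | ∀ A : Set C, IsTriangulatedSub A → S ⊆ A → X ∈ A}

/-- A family is semiorthogonal if there are no nonzero morphisms from objects of a later
subcategory to objects of an earlier one. -/
def IsSemiorthogonal {n : ℕ} (A : Fin n → Set C) : Prop :=
  ∀ ⦃i j : Fin n⦄, j < i → ∀ a ∈ A i, ∀ b ∈ A j, ∀ f : a ⟶ b, f = 0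

/-- `IsSODOn S A` : the family `A` is a semiorthogonal decomposition of the (strictly full
triangulated) subcategory with objects `S`; every object of `S` admits a filtration
`0 = T_n → ... → T_1 → T_0 = T` whose `k`-th cone lies in `A k`. -/
structure IsSODOn {n : ℕ} (S : Set C) (A : Fin n → Set C) : Prop where
  subset : ∀ i, A i ⊆ S
  semiorthogonal : IsSemiorthogonal A
  filtration : ∀ T ∈ S, ∃ (F : Fin (n+1) → C) (f : ∀ k : Fin n, F k.succ ⟶ F k.castSucc),
    F 0 = T ∧ IsZero (F (Fin.last n)) ∧
    ∀ k : Fin n, ∃ (Q : C) (g : F k.castSucc ⟶ Q) (h : Q ⟶ (F k.succ)⟦(1 : ℤ)⟧),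
      Q ∈ A k ∧ Triangle.mk (f k) g h ∈ distTriang C

end Triang

end HPD
namespace HPD
open CategoryTheory Limits Pretriangulated

/-- The composition `F 0 ⋙ F 1 ⋙ ⋯ ⋙ F (n-1)` of a finite family of endofunctors
(so that `F 0` is applied first). -/
def composeAll {C : Type u} [Category.{v} C] {n : ℕ} (F : Fin n → (C ⥤ C)) : C ⥤ C :=
  (List.ofFn F).foldr (· ⋙ ·) (𝟭 C)

/-! ### Auxiliary lemmas -/

section ComposeAll

variable {C : Type u} [Category.{v} C]

lemma composeAll_zero (F : Fin 0 → (C ⥤ C)) : composeAll F = 𝟭 C := by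
  rw [composeAll, List.ofFn_zero, List.foldr_nil]

lemma composeAll_succ {n : ℕ} (F : Fin (n + 1) → (C ⥤ C)) :
    composeAll F = F 0 ⋙ composeAll (fun i => F i.succ) := by
  rw [composeAll, List.ofFn_succ, List.foldr_cons, composeAll]

end ComposeAll

section AuxTriang

variable {C : Type u} [Category.{v} C] [HasZeroObject C] [Preadditive C] [HasShift C ℤ]
  [∀ n : ℤ, (shiftFunctor C n).Additive] [Pretriangulated C]

lemma shift_hom_zero₁ {X Y : C} (i j : ℤ) (h : i + j = 0) (f : X⟦i⟧ ⟶ Y)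
    (h0 : (shiftEquiv' C i j h).toAdjunction.homEquiv X Y f = 0) : f = 0 := by
  apply ((shiftEquiv' C i j h).toAdjunction.homEquiv X Y).injective
  rw [h0]
  erw [Adjunction.homEquiv_unit, Functor.map_zero, comp_zero]

lemma shift_hom_zero₂ {X Y : C} (i j : ℤ) (h : i + j = 0) (f : X ⟶ Y⟦j⟧)
    (h0 : ((shiftEquiv' C i j h).toAdjunction.homEquiv X Y).symm f = 0) : f = 0 := by
  apply ((shiftEquiv' C i j h).toAdjunction.homEquiv X Y).symm.injective
  rw [h0]
  erw [Adjunction.homEquiv_counit, Functor.map_zero, zero_comp]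

lemma isTriangulatedSub_closure (S : Set C) :
    IsTriangulatedSub (triangulatedClosure S) where
  zero X hX D hD hSD := hD.zero X hX
  isoClosed X Y e hX D hD hSD := hD.isoClosed e (hX D hD hSD)
  shift X n hX D hD hSD := hD.shift X n (hX D hD hSD)
  ext₂ T hT h1 h3 D hD hSD := hD.ext₂ T hT (h1 D hD hSD) (h3 D hD hSD)

lemma subset_triangulatedClosure (S : Set C) : S ⊆ triangulatedClosure S :=
  fun _ hx _ _ hSD => hSD hx

lemma leftOrth_shift {B : Set C} (hBs : ∀ ⦃b : C⦄, b ∈ B → ∀ m : ℤ, b⟦m⟧ ∈ B)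
    {x : C} (hx : x ∈ leftOrth B) (m : ℤ) : x⟦m⟧ ∈ leftOrth B := by
  intro a ha f
  exact shift_hom_zero₁ m (-m) (add_neg_cancel m) f (hx _ (hBs ha (-m)) _)

lemma rightOrth_shift {B : Set C} (hBs : ∀ ⦃b : C⦄, b ∈ B → ∀ m : ℤ, b⟦m⟧ ∈ B)
    {x : C} (hx : x ∈ rightOrth B) (m : ℤ) : x⟦m⟧ ∈ rightOrth B := by
  intro a ha f
  exact shift_hom_zero₂ (-m) m (neg_add_cancel m) f (hx _ (hBs ha (-m)) _)

lemma leftOrth_closure {ι : Type*} (A : ι → Set C)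
    (hA : ∀ i, ∀ a ∈ A i, ∀ m : ℤ, a⟦m⟧ ∈ A i)
    {b : C} (hb : ∀ i, b ∈ leftOrth (A i)) :
    b ∈ leftOrth (triangulatedClosure (⋃ i, A i)) := by
  intro a ha f
  have hWsub : IsTriangulatedSub {Y : C | ∀ (m : ℤ) (g : b ⟶ Y⟦m⟧), g = 0} := by
    constructor
    · intro X hX m g
      exact ((shiftFunctor C m).map_isZero hX).eq_of_tgt g 0
    · intro X Y e hX m g
      have h := hX m (g ≫ (shiftFunctor C m).map e.inv)
      have h2 := congrArg (fun t => t ≫ (shiftFunctor C m).map e.hom) h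
      simpa [← CategoryTheory.Functor.map_comp] using h2
    · intro X k hX m g
      have h := hX (k + m) (g ≫ (shiftFunctorAdd' C k m (k + m) rfl).inv.app X)
      have h2 := congrArg (fun t => t ≫ (shiftFunctorAdd' C k m (k + m) rfl).hom.app X) h
      simpa using h2
    · intro T hT h1 h3 m g
      have hT' : (Triangle.shiftFunctor C m).obj T ∈ distTriang C :=
        Triangle.shift_distinguished T hT m
      obtain ⟨g', hg'⟩ := Triangle.coyoneda_exact₂ _ hT' g (h3 m _)
      rw [hg', h1 m g']
      exact zero_comp
  have hsub : (⋃ i, A i) ⊆ {Y : C | ∀ (m : ℤ) (g : b ⟶ Y⟦m⟧), g = 0} := by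
    intro x hx
    obtain ⟨i, hi⟩ := Set.mem_iUnion.1 hx
    intro m g
    exact hb i _ (hA i x hi m) g
  have h0 := ha _ hWsub hsub 0 (f ≫ (shiftFunctorZero C ℤ).inv.app a)
  have h2 := congrArg (fun t => t ≫ (shiftFunctorZero C ℤ).hom.app a) h0
  simpa using h2

lemma rightOrth_closure {ι : Type*} (A : ι → Set C)
    (hA : ∀ i, ∀ a ∈ A i, ∀ m : ℤ, a⟦m⟧ ∈ A i)
    {b : C} (hb : ∀ i, b ∈ rightOrth (A i)) :
    b ∈ rightOrth (triangulatedClosure (⋃ i, A i)) := by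
  intro a ha f
  have hWsub : IsTriangulatedSub {Y : C | ∀ (m : ℤ) (g : Y⟦m⟧ ⟶ b), g = 0} := by
    constructor
    · intro X hX m g
      exact ((shiftFunctor C m).map_isZero hX).eq_of_src g 0
    · intro X Y e hX m g
      have h := hX m ((shiftFunctor C m).map e.hom ≫ g)
      have h2 := congrArg (fun t => (shiftFunctor C m).map e.inv ≫ t) h
      simpa [← CategoryTheory.Functor.map_comp_assoc, ← CategoryTheory.Functor.map_comp]
        using h2
    · intro X k hX m g
      have h := hX (k + m) ((shiftFunctorAdd' C k m (k + m) rfl).hom.app X ≫ g)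
      have h2 := congrArg (fun t => (shiftFunctorAdd' C k m (k + m) rfl).inv.app X ≫ t) h
      simpa using h2
    · intro T hT h1 h3 m g
      have hT' : (Triangle.shiftFunctor C m).obj T ∈ distTriang C :=
        Triangle.shift_distinguished T hT m
      obtain ⟨g', hg'⟩ := Triangle.yoneda_exact₂ _ hT' g (h1 m _)
      rw [hg', h3 m g']
      exact comp_zero
  have hsub : (⋃ i, A i) ⊆ {Y : C | ∀ (m : ℤ) (g : Y⟦m⟧ ⟶ b), g = 0} := by
    intro x hx
    obtain ⟨i, hi⟩ := Set.mem_iUnion.1 hx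
    intro m g
    exact hb i _ (hA i x hi m) g
  have h0 := ha _ hWsub hsub 0 ((shiftFunctorZero C ℤ).hom.app a ≫ f)
  have h2 := congrArg (fun t => (shiftFunctorZero C ℤ).inv.app a ≫ t) h0
  simpa using h2

lemma postcomp_counit_bij {B : Set C} {R₀ : C ⥤ ObjectProperty.FullSubcategory (fun X : C => X ∈ B)}
    (adj : incl B ⊣ R₀) (T : C) {x : C} (hx : x ∈ B) :
    Function.Bijective (fun g : x ⟶ (incl B).obj (R₀.obj T) => g ≫ adj.counit.app T) := by
  have h : (fun g : x ⟶ (incl B).obj (R₀.obj T) => g ≫ adj.counit.app T) =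
      fun g => (adj.homEquiv ⟨x, hx⟩ T).symm (ObjectProperty.homMk g) := by
    funext g
    rw [Adjunction.homEquiv_counit]
    rfl
  rw [h]
  exact (adj.homEquiv ⟨x, hx⟩ T).symm.bijective.comp
    ⟨fun a b hab => congrArg InducedCategory.Hom.hom hab, ObjectProperty.homMk_surjective⟩

lemma precomp_unit_bij {B : Set C} {L₀ : C ⥤ ObjectProperty.FullSubcategory (fun X : C => X ∈ B)}
    (adj : L₀ ⊣ incl B) (T : C) {x : C} (hx : x ∈ B) :
    Function.Bijective (fun g : (incl B).obj (L₀.obj T) ⟶ x => adj.unit.app T ≫ g) := by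
  have h : (fun g : (incl B).obj (L₀.obj T) ⟶ x => adj.unit.app T ≫ g) =
      fun g => adj.homEquiv T ⟨x, hx⟩ (ObjectProperty.homMk g) := by
    funext g
    rw [Adjunction.homEquiv_unit]
    rfl
  rw [h]
  exact (adj.homEquiv T ⟨x, hx⟩).bijective.comp
    ⟨fun a b hab => congrArg InducedCategory.Hom.hom hab, ObjectProperty.homMk_surjective⟩

lemma QpropR {B : Set C} (hBs : ∀ ⦃b : C⦄, b ∈ B → ∀ m : ℤ, b⟦m⟧ ∈ B)
    {R₀ : C ⥤ ObjectProperty.FullSubcategory (fun X : C => X ∈ B)} (adj : incl B ⊣ R₀) (T : C)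
    {Q : C} {v : T ⟶ Q} {w : Q ⟶ ((incl B).obj (R₀.obj T))⟦(1 : ℤ)⟧}
    (hTri : Triangle.mk (adj.counit.app T) v w ∈ distTriang C)
    {b : C} (hb : b ∈ B) (f : b ⟶ Q) : f = 0 := by
  have E := (shiftEquiv' C (-1 : ℤ) (1 : ℤ) (by omega)).toAdjunction
  have h1 : f ≫ w = 0 := by
    set y := (E.homEquiv b ((incl B).obj (R₀.obj T))).symm (f ≫ w) with hy
    have hz : w ≫ (shiftEquiv' C (-1 : ℤ) (1 : ℤ) (by omega)).inverse.map
        (adj.counit.app T) = 0 := comp_distTriang_mor_zero₃₁ _ hTri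
    have e1 : E.homEquiv b T (y ≫ adj.counit.app T) = 0 := by
      rw [Adjunction.homEquiv_naturality_right, hy, Equiv.apply_symm_apply]
      exact (Category.assoc _ _ _).trans ((congrArg (f ≫ ·) hz).trans comp_zero)
    have e2 : y ≫ adj.counit.app T = 0 := by
      have h' := congrArg (E.homEquiv b T).symm e1
      rwa [Equiv.symm_apply_apply, Adjunction.homEquiv_counit, Functor.map_zero, zero_comp] at h'
    have e3 : y = 0 := by
      apply (postcomp_counit_bij adj T (hBs hb (-1))).injective
      show y ≫ adj.counit.app T = (0 : b⟦(-1 : ℤ)⟧ ⟶ _) ≫ adj.counit.app T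
      rw [e2]
      exact zero_comp.symm
    have e4 : E.homEquiv b _ y = 0 := by
      rw [e3, Adjunction.homEquiv_unit, Functor.map_zero, comp_zero]
    rw [hy, Equiv.apply_symm_apply] at e4
    exact e4
  obtain ⟨g, hg⟩ := Triangle.coyoneda_exact₃ _ hTri f h1
  have hgv : f = g ≫ v := hg
  obtain ⟨g', hg'⟩ := (postcomp_counit_bij adj T hb).surjective g
  have hg'' : g' ≫ adj.counit.app T = g := hg'
  have hz : adj.counit.app T ≫ v = 0 := comp_distTriang_mor_zero₁₂ _ hTri
  rw [hgv, ← hg'']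
  exact (Category.assoc _ _ _).trans ((congrArg (g' ≫ ·) hz).trans comp_zero)

lemma QpropL {B : Set C} (hBs : ∀ ⦃b : C⦄, b ∈ B → ∀ m : ℤ, b⟦m⟧ ∈ B)
    {L₀ : C ⥤ ObjectProperty.FullSubcategory (fun X : C => X ∈ B)} (adj : L₀ ⊣ incl B) (T : C)
    {Q : C} {v : (incl B).obj (L₀.obj T) ⟶ Q} {w : Q ⟶ T⟦(1 : ℤ)⟧}
    (hTri : Triangle.mk (adj.unit.app T) v w ∈ distTriang C)
    {b : C} (hb : b ∈ B) (f : Q ⟶ b) : f = 0 := by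
  have h1 : v ≫ f = 0 := by
    apply (precomp_unit_bij adj T hb).injective
    show adj.unit.app T ≫ v ≫ f = adj.unit.app T ≫ 0
    have hz : adj.unit.app T ≫ v = 0 := comp_distTriang_mor_zero₁₂ _ hTri
    rw [← Category.assoc, hz, zero_comp, comp_zero]
  obtain ⟨g, hg⟩ := Triangle.yoneda_exact₃ _ hTri f h1
  have hgf : f = w ≫ g := hg
  have E := (shiftEquiv C (1 : ℤ)).toAdjunction
  obtain ⟨h', hh'⟩ := (precomp_unit_bij adj T (hBs hb (-1))).surjective (E.homEquiv T b g)
  have hh'' : adj.unit.app T ≫ h' = E.homEquiv T b g := hh'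
  have hg2 : g = (shiftEquiv C (1 : ℤ)).functor.map (adj.unit.app T) ≫
      (E.homEquiv ((incl B).obj (L₀.obj T)) b).symm h' := by
    apply (E.homEquiv T b).injective
    rw [Adjunction.homEquiv_naturality_left]
    simp only [Functor.comp_obj]
    exact hh''.symm.trans (congrArg (adj.unit.app T ≫ ·) (Equiv.apply_symm_apply _ h').symm)
  have hz : w ≫ (shiftEquiv C (1 : ℤ)).functor.map (adj.unit.app T) = 0 :=
    comp_distTriang_mor_zero₃₁ _ hTri
  rw [hgf, hg2]
  exact (Category.assoc _ _ _).symm.trans ((congrArg (· ≫ _) hz).trans zero_comp)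

lemma orthOrth_left {B : Set C} (hB : IsTriangulatedSub B)
    (hadm : (incl B).IsRightAdjoint) : rightOrth (leftOrth B) ⊆ B := by
  obtain ⟨P, ⟨adj⟩⟩ := hadm.exists_leftAdjoint
  intro y hy
  have hBs : ∀ ⦃b : C⦄, b ∈ B → ∀ m : ℤ, b⟦m⟧ ∈ B := fun b hb m => hB.shift b m hb
  obtain ⟨Q, v, w, hTri⟩ := distinguished_cocone_triangle (adj.unit.app y)
  have hQ : Q ∈ leftOrth B := fun b hb f => QpropL hBs adj y hTri hb f
  have hls : ∀ ⦃c : C⦄, c ∈ leftOrth B → ∀ m : ℤ, c⟦m⟧ ∈ leftOrth B :=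
    fun c hc m => leftOrth_shift hBs hc m
  have hQ2 : ∀ x, x ∈ leftOrth B → ∀ f : x ⟶ Q, f = 0 := by
    intro x hx f
    have h1 : f ≫ w = 0 := rightOrth_shift hls hy 1 x hx (f ≫ w)
    obtain ⟨g, hg⟩ := Triangle.coyoneda_exact₃ _ hTri f h1
    have hgv : f = g ≫ v := hg
    rw [hgv, hx _ (P.obj y).property g]
    exact zero_comp
  have hzero : IsZero Q := (IsZero.iff_id_eq_zero Q).2 (hQ2 Q hQ (𝟙 Q))
  haveI : IsIso (adj.unit.app y) :=
    (Triangle.isZero₃_iff_isIso₁ (Triangle.mk (adj.unit.app y) v w) hTri).1 hzero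
  exact hB.isoClosed (asIso (adj.unit.app y)).symm (P.obj y).property

lemma orthOrth_right {B : Set C} (hB : IsTriangulatedSub B)
    (hadm : (incl B).IsLeftAdjoint) : leftOrth (rightOrth B) ⊆ B := by
  obtain ⟨q, ⟨adj⟩⟩ := hadm.exists_rightAdjoint
  intro y hy
  have hBs : ∀ ⦃b : C⦄, b ∈ B → ∀ m : ℤ, b⟦m⟧ ∈ B := fun b hb m => hB.shift b m hb
  obtain ⟨Q, v, w, hTri⟩ := distinguished_cocone_triangle (adj.counit.app y)
  have hQ : Q ∈ rightOrth B := fun b hb f => QpropR hBs adj y hTri hb f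
  have hv : v = 0 := hy Q hQ v
  have hid : 𝟙 Q = 0 := by
    obtain ⟨g, hg⟩ := Triangle.yoneda_exact₃ _ hTri (𝟙 Q) (by
      show v ≫ 𝟙 Q = 0
      rw [Category.comp_id, hv])
    have hgw : 𝟙 Q = w ≫ g := hg
    rw [hgw, hQ _ (hB.shift _ 1 (q.obj y).property) g, comp_zero]
  have hzero : IsZero Q := (IsZero.iff_id_eq_zero Q).2 hid
  haveI : IsIso (adj.counit.app y) :=
    (Triangle.isZero₃_iff_isIso₁ (Triangle.mk (adj.counit.app y) v w) hTri).1 hzero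
  exact hB.isoClosed (asIso (adj.counit.app y)) (q.obj y).property

end AuxTriang

section Comp

variable {C : Type u} [Category.{v} C] [HasZeroObject C] [Preadditive C] [HasShift C ℤ]
  [∀ n : ℤ, (shiftFunctor C n).Additive] [Pretriangulated C]

lemma compR {n : ℕ} : ∀ (A : Fin n → Set C)
    (_ : ∀ i, IsTriangulatedSub (A i))
    (_ : ∀ i, (incl (A i)).IsRightAdjoint)
    (_ : ∀ (i j : Fin n), j < i → ∀ a ∈ A i, ∀ b ∈ A j, ∀ f : a ⟶ b, f = 0)
    (R : ∀ i : Fin n, C ⥤ ObjectProperty.FullSubcategory (fun X : C => X ∈ leftOrth (A i)))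
    (_ : ∀ i, incl (leftOrth (A i)) ⊣ R i),
    ∃ ε : composeAll (fun i => R i ⋙ incl (leftOrth (A i))) ⟶ 𝟭 C,
      (∀ (T : C) (i : Fin n), ∀ a ∈ A i,
          ∀ f : (composeAll (fun i => R i ⋙ incl (leftOrth (A i)))).obj T ⟶ a, f = 0) ∧
      (∀ (X : C) (D : Set C), IsTriangulatedSub D → (∀ i, A i ⊆ D) →
          (composeAll (fun i => R i ⋙ incl (leftOrth (A i)))).obj X ∈ D → X ∈ D) ∧
      (∀ (X b : C), (∀ i, b ∈ leftOrth (A i)) → (∀ f : b ⟶ X, f = 0) →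
          ∀ f : b ⟶ (composeAll (fun i => R i ⋙ incl (leftOrth (A i)))).obj X, f = 0) ∧
      (∀ (T b : C), (∀ i, b ∈ leftOrth (A i)) →
          Function.Bijective
            (fun g : b ⟶ (composeAll (fun i => R i ⋙ incl (leftOrth (A i)))).obj T =>
              g ≫ ε.app T)) ∧
      (∀ (T a : C), (∀ i, ∀ c ∈ A i, ∀ f : c ⟶ a, f = 0) → (∀ f : T ⟶ a, f = 0) →
          ∀ f : (composeAll (fun i => R i ⋙ incl (leftOrth (A i)))).obj T ⟶ a, f = 0) := by
  induction n with
  | zero =>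
    intro A hA hadm hso R adjR
    rw [composeAll_zero]
    refine ⟨𝟙 (𝟭 C), ?_, ?_, ?_, ?_, ?_⟩
    · intro T i; exact i.elim0
    · intro X D _ _ hX; exact hX
    · intro X b _ h f; exact h f
    · intro T b _
      have h0 : Function.Bijective (id : (b ⟶ T) → (b ⟶ T)) := Function.bijective_id
      convert h0 using 1
      case e'_3 =>
        funext g
        simp
      all_goals rfl
    · intro T a _ hT f; exact hT f
  | succ n ih =>
    intro A hA hadm hso R adjR
    obtain ⟨ε', memb', gen', orth', bij', pres'⟩ :=
      ih (fun i => A i.succ) (fun i => hA i.succ) (fun i => hadm i.succ)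
        (fun i j h => hso i.succ j.succ (Fin.succ_lt_succ_iff.2 h))
        (fun i => R i.succ) (fun i => adjR i.succ)
    rw [composeAll_succ]
    have hBs0 : ∀ ⦃b : C⦄, b ∈ leftOrth (A 0) → ∀ m : ℤ, b⟦m⟧ ∈ leftOrth (A 0) :=
      fun b hb m => leftOrth_shift (fun a ha k => (hA 0).shift a k ha) hb m
    have key : ∀ T : C, ∃ (Q : C) (v : T ⟶ Q)
        (w : Q ⟶ ((incl (leftOrth (A 0))).obj ((R 0).obj T))⟦(1 : ℤ)⟧),
        (Triangle.mk ((adjR 0).counit.app T) v w ∈ distTriang C) ∧ Q ∈ A 0 := by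
      intro T
      obtain ⟨Q, v, w, hTri⟩ := distinguished_cocone_triangle ((adjR 0).counit.app T)
      refine ⟨Q, v, w, hTri, orthOrth_left (hA 0) (hadm 0) ?_⟩
      intro b hb f
      exact QpropR hBs0 (adjR 0) T hTri hb f
    refine ⟨Functor.whiskerLeft _ ε' ≫ (Functor.rightUnitor _).hom ≫ (adjR 0).counit,
      ?_, ?_, ?_, ?_, ?_⟩
    · -- membership
      intro T i
      induction i using Fin.cases with
      | zero =>
        intro a ha f
        exact pres' ((incl (leftOrth (A 0))).obj ((R 0).obj T)) a
          (fun i c hc h => hso i.succ 0 (Fin.succ_pos i) c hc a ha h)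
          (fun h => ((R 0).obj T).property a ha h) f
      | succ i' =>
        intro a ha f
        exact memb' ((incl (leftOrth (A 0))).obj ((R 0).obj T)) i' a ha f
    · -- generation
      intro X D hD hsubD hX
      obtain ⟨Q, v, w, hTri, hQA⟩ := key X
      have h1 := gen' ((incl (leftOrth (A 0))).obj ((R 0).obj X)) D hD
        (fun i => hsubD i.succ) hX
      exact hD.ext₂ _ hTri h1 (hsubD 0 hQA)
    · -- orthogonality propagation
      intro X b hb hfb f
      refine orth' ((incl (leftOrth (A 0))).obj ((R 0).obj X)) b (fun i => hb i.succ) ?_ f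
      intro h
      obtain ⟨Q, v, w, hTri, hQA⟩ := key X
      obtain ⟨g, hg⟩ := Triangle.coyoneda_exact₂ _ (inv_rot_of_distTriang _ hTri) h (hfb _)
      rw [hg, hb 0 _ ((hA 0).shift Q (-1) hQA) g]
      exact zero_comp
    · -- bijectivity
      intro T b hb
      have e1 := bij' ((incl (leftOrth (A 0))).obj ((R 0).obj T)) b (fun i => hb i.succ)
      have e2 := postcomp_counit_bij (adjR 0) T (hb 0)
      have e3 := e2.comp e1
      convert e3 using 1
      case e'_3 =>
        funext g
        simp
      all_goals rfl
    · -- preservation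
      intro T a ha hT f
      obtain ⟨Q, v, w, hTri, hQA⟩ := key T
      refine pres' ((incl (leftOrth (A 0))).obj ((R 0).obj T)) a
        (fun i c hc h => ha i.succ c hc h) ?_ f
      intro h
      obtain ⟨g, hg⟩ := Triangle.yoneda_exact₂ _ (inv_rot_of_distTriang _ hTri) h
        (ha 0 _ ((hA 0).shift Q (-1) hQA) _)
      rw [hg, hT g]
      exact comp_zero

lemma compL {n : ℕ} : ∀ (B : Fin n → Set C)
    (_ : ∀ i, IsTriangulatedSub (B i))
    (_ : ∀ i, (incl (B i)).IsLeftAdjoint)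
    (_ : ∀ (i j : Fin n), i < j → ∀ a ∈ B i, ∀ c ∈ B j, ∀ f : a ⟶ c, f = 0)
    (L : ∀ i : Fin n, C ⥤ ObjectProperty.FullSubcategory (fun X : C => X ∈ rightOrth (B i)))
    (_ : ∀ i, L i ⊣ incl (rightOrth (B i))),
    ∃ η : 𝟭 C ⟶ composeAll (fun i => L i ⋙ incl (rightOrth (B i))),
      (∀ (T : C) (i : Fin n), ∀ a ∈ B i,
          ∀ f : a ⟶ (composeAll (fun i => L i ⋙ incl (rightOrth (B i)))).obj T, f = 0) ∧
      (∀ (X : C) (D : Set C), IsTriangulatedSub D → (∀ i, B i ⊆ D) →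
          (composeAll (fun i => L i ⋙ incl (rightOrth (B i)))).obj X ∈ D → X ∈ D) ∧
      (∀ (X b : C), (∀ i, b ∈ rightOrth (B i)) → (∀ f : X ⟶ b, f = 0) →
          ∀ f : (composeAll (fun i => L i ⋙ incl (rightOrth (B i)))).obj X ⟶ b, f = 0) ∧
      (∀ (T b : C), (∀ i, b ∈ rightOrth (B i)) →
          Function.Bijective
            (fun g : (composeAll (fun i => L i ⋙ incl (rightOrth (B i)))).obj T ⟶ b =>
              η.app T ≫ g)) ∧
      (∀ (T a : C), (∀ i, ∀ c ∈ B i, ∀ f : a ⟶ c, f = 0) → (∀ f : a ⟶ T, f = 0) →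
          ∀ f : a ⟶ (composeAll (fun i => L i ⋙ incl (rightOrth (B i)))).obj T, f = 0) := by
  induction n with
  | zero =>
    intro B hB hadm hso L adjL
    rw [composeAll_zero]
    refine ⟨𝟙 (𝟭 C), ?_, ?_, ?_, ?_, ?_⟩
    · intro T i; exact i.elim0
    · intro X D _ _ hX; exact hX
    · intro X b _ h f; exact h f
    · intro T b _
      have h0 : Function.Bijective (id : (T ⟶ b) → (T ⟶ b)) := Function.bijective_id
      convert h0 using 1
      case e'_3 =>
        funext g
        simp
      all_goals rfl
    · intro T a _ hT f; exact hT f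
  | succ n ih =>
    intro B hB hadm hso L adjL
    obtain ⟨η', memb', gen', orth', bij', pres'⟩ :=
      ih (fun i => B i.succ) (fun i => hB i.succ) (fun i => hadm i.succ)
        (fun i j h => hso i.succ j.succ (Fin.succ_lt_succ_iff.2 h))
        (fun i => L i.succ) (fun i => adjL i.succ)
    rw [composeAll_succ]
    have hBs0 : ∀ ⦃b : C⦄, b ∈ rightOrth (B 0) → ∀ m : ℤ, b⟦m⟧ ∈ rightOrth (B 0) :=
      fun b hb m => rightOrth_shift (fun a ha k => (hB 0).shift a k ha) hb m
    have key : ∀ T : C, ∃ (Q : C) (v : (incl (rightOrth (B 0))).obj ((L 0).obj T) ⟶ Q)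
        (w : Q ⟶ T⟦(1 : ℤ)⟧),
        (Triangle.mk ((adjL 0).unit.app T) v w ∈ distTriang C) ∧ Q⟦(-1 : ℤ)⟧ ∈ B 0 := by
      intro T
      obtain ⟨Q, v, w, hTri⟩ := distinguished_cocone_triangle ((adjL 0).unit.app T)
      refine ⟨Q, v, w, hTri, orthOrth_right (hB 0) (hadm 0) ?_⟩
      intro b hb f
      exact shift_hom_zero₁ (-1) 1 (by omega) f
        (QpropL hBs0 (adjL 0) T hTri (hBs0 hb 1) _)
    refine ⟨(adjL 0).unit ≫ (Functor.rightUnitor _).inv ≫ Functor.whiskerLeft _ η',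
      ?_, ?_, ?_, ?_, ?_⟩
    · -- membership
      intro T i
      induction i using Fin.cases with
      | zero =>
        intro a ha f
        exact pres' ((incl (rightOrth (B 0))).obj ((L 0).obj T)) a
          (fun i c hc h => hso 0 i.succ (Fin.succ_pos i) a ha c hc h)
          (fun h => ((L 0).obj T).property a ha h) f
      | succ i' =>
        intro a ha f
        exact memb' ((incl (rightOrth (B 0))).obj ((L 0).obj T)) i' a ha f
    · -- generation
      intro X D hD hsubD hX
      obtain ⟨Q, v, w, hTri, hQB⟩ := key X
      have h1 := gen' ((incl (rightOrth (B 0))).obj ((L 0).obj X)) D hD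
        (fun i => hsubD i.succ) hX
      exact hD.ext₂ _ (inv_rot_of_distTriang _ hTri) (hsubD 0 hQB) h1
    · -- orthogonality propagation
      intro X b hb hfb f
      refine orth' ((incl (rightOrth (B 0))).obj ((L 0).obj X)) b (fun i => hb i.succ) ?_ f
      intro h
      obtain ⟨Q, v, w, hTri, hQB⟩ := key X
      obtain ⟨g, hg⟩ := Triangle.yoneda_exact₃ _ (inv_rot_of_distTriang _ hTri) h (hfb _)
      rw [hg, hb 0 _ ((hB 0).shift _ 1 hQB) g]
      exact comp_zero
    · -- bijectivity
      intro T b hb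
      have e1 := bij' ((incl (rightOrth (B 0))).obj ((L 0).obj T)) b (fun i => hb i.succ)
      have e2 := precomp_unit_bij (adjL 0) T (hb 0)
      have e3 := e2.comp e1
      convert e3 using 1
      case e'_3 =>
        funext g
        simp
      all_goals rfl
    · -- preservation
      intro T a ha hT f
      obtain ⟨Q, v, w, hTri, hQB⟩ := key T
      refine pres' ((incl (rightOrth (B 0))).obj ((L 0).obj T)) a
        (fun i c hc h => ha i.succ c hc h) ?_ f
      intro h
      obtain ⟨g, hg⟩ := Triangle.coyoneda_exact₃ _ (inv_rot_of_distTriang _ hTri) h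
        (ha 0 _ ((hB 0).shift _ 1 hQB) _)
      rw [hg, hT g]
      exact zero_comp

end Comp

/-- Morphisms in a full subcategory are the morphisms between the underlying objects. -/
def fullSubHomEquiv {C : Type u} [Category.{v} C] {P : ObjectProperty C}
    (X Y : P.FullSubcategory) : (X ⟶ Y) ≃ (X.obj ⟶ Y.obj) :=
  ⟨fun f => f.hom, ObjectProperty.homMk, fun _ => rfl, fun _ => rfl⟩

/-- If `A_1, …, A_n` is a semiorthogonal sequence of admissible subcategories of a triangulated
category `T`, then `⟨A_1, …, A_n⟩` is admissible, `R_{⟨A_1,…,A_n⟩} = R_{A_n} ∘ ⋯ ∘ R_{A_1}` and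
`L_{⟨A_1,…,A_n⟩} = L_{A_1} ∘ ⋯ ∘ L_{A_n}`, where the mutation functors are encoded by the
(given) adjoints of the inclusions of the corresponding orthogonal subcategories. -/
theorem statement_3 {C : Type u} [Category.{v} C] [HasZeroObject C] [Preadditive C]
    [HasShift C ℤ] [∀ n : ℤ, (shiftFunctor C n).Additive] [Pretriangulated C]
    {n : ℕ} (A : Fin n → Set C)
    (hA : ∀ i, IsTriangulatedSub (A i)) (hadm : ∀ i, Admissible (A i))
    (hso : IsSemiorthogonal A)
    (R : ∀ i : Fin n, C ⥤ ObjectProperty.FullSubcategory (fun X : C => X ∈ leftOrth (A i)))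
    (adjR : ∀ i, incl (leftOrth (A i)) ⊣ R i)
    (L : ∀ i : Fin n, C ⥤ ObjectProperty.FullSubcategory (fun X : C => X ∈ rightOrth (A i)))
    (adjL : ∀ i, L i ⊣ incl (rightOrth (A i)))
    (RG : C ⥤ ObjectProperty.FullSubcategory
      (fun X : C => X ∈ leftOrth (triangulatedClosure (⋃ i, A i))))
    (adjRG : incl (leftOrth (triangulatedClosure (⋃ i, A i))) ⊣ RG)
    (LG : C ⥤ ObjectProperty.FullSubcategory
      (fun X : C => X ∈ rightOrth (triangulatedClosure (⋃ i, A i))))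
    (adjLG : LG ⊣ incl (rightOrth (triangulatedClosure (⋃ i, A i)))) :
    Admissible (triangulatedClosure (⋃ i, A i)) ∧
    Nonempty ((RG ⋙ incl (leftOrth (triangulatedClosure (⋃ i, A i)))) ≅
      composeAll (fun i => R i ⋙ incl (leftOrth (A i)))) ∧
    Nonempty ((LG ⋙ incl (rightOrth (triangulatedClosure (⋃ i, A i)))) ≅
      composeAll (fun i => L i.rev ⋙ incl (rightOrth (A i.rev)))) := by
  classical
  have hTS := isTriangulatedSub_closure (⋃ i, A i)
  have hsub : ∀ i, A i ⊆ triangulatedClosure (⋃ i, A i) :=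
    fun i => (Set.subset_iUnion A i).trans (subset_triangulatedClosure _)
  have hSs : ∀ ⦃a : C⦄, a ∈ triangulatedClosure (⋃ i, A i) → ∀ m : ℤ,
      a⟦m⟧ ∈ triangulatedClosure (⋃ i, A i) := fun a ha m => hTS.shift a m ha
  have hrOs : ∀ ⦃b : C⦄, b ∈ rightOrth (triangulatedClosure (⋃ i, A i)) → ∀ m : ℤ,
      b⟦m⟧ ∈ rightOrth (triangulatedClosure (⋃ i, A i)) :=
    fun b hb m => rightOrth_shift hSs hb m
  have hlOs : ∀ ⦃b : C⦄, b ∈ leftOrth (triangulatedClosure (⋃ i, A i)) → ∀ m : ℤ,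
      b⟦m⟧ ∈ leftOrth (triangulatedClosure (⋃ i, A i)) :=
    fun b hb m => leftOrth_shift hSs hb m
  obtain ⟨ε, membR, genR, orthR, bijR, presR⟩ :=
    compR A hA (fun i => (hadm i).2) (fun i j h => hso h) R adjR
  obtain ⟨η, membL, genL, orthL, bijL, presL⟩ :=
    compL (fun i => A i.rev) (fun i => hA i.rev) (fun i => (hadm i.rev).1)
      (fun i j h a ha c hc f => hso (Fin.rev_lt_rev.mpr h) a ha c hc f)
      (fun i => L i.rev) (fun i => adjL i.rev)
  have hUn : (⋃ i, A (Fin.rev i)) = ⋃ i, A i := by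
    apply Set.Subset.antisymm
    · exact Set.iUnion_subset fun i => Set.subset_iUnion A i.rev
    · exact Set.iUnion_subset fun i => by
        simpa [Fin.rev_rev] using Set.subset_iUnion (fun k => A (Fin.rev k)) i.rev
  have hKR : ∀ T : C, (composeAll (fun i => R i ⋙ incl (leftOrth (A i)))).obj T ∈
      leftOrth (triangulatedClosure (⋃ i, A i)) :=
    fun T => leftOrth_closure A (fun i a ha m => (hA i).shift a m ha) (fun i a ha f => membR T i a ha f)
  have hKL : ∀ T : C, (composeAll (fun i => L i.rev ⋙ incl (rightOrth (A i.rev)))).obj T ∈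
      rightOrth (triangulatedClosure (⋃ i, A i)) := by
    intro T
    have h := rightOrth_closure (fun i => A i.rev)
      (fun i a ha m => (hA i.rev).shift a m ha) (fun i a ha f => membL T i a ha f)
    rwa [hUn] at h
  -- Right admissibility : a right adjoint to the inclusion
  have keyG : ∀ T : C, ∃ (FT : C) (_ : FT ∈ triangulatedClosure (⋃ i, A i)) (u : FT ⟶ T),
      ∀ x ∈ triangulatedClosure (⋃ i, A i),
        Function.Bijective (fun g : x ⟶ FT => g ≫ u) := by
    intro T
    obtain ⟨Q, v, w, hTri⟩ := distinguished_cocone_triangle (adjLG.unit.app T)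
    have hFb : ∀ b ∈ rightOrth (triangulatedClosure (⋃ i, A i)),
        ∀ f : Q⟦(-1 : ℤ)⟧ ⟶ b, f = 0 := by
      intro b hb f
      exact shift_hom_zero₁ (-1) 1 (by omega) f
        (QpropL hrOs adjLG T hTri (hrOs hb 1) _)
    have hidz : 𝟙 ((composeAll (fun i => L i.rev ⋙ incl (rightOrth (A i.rev)))).obj
        (Q⟦(-1 : ℤ)⟧)) = 0 :=
      orthL (Q⟦(-1 : ℤ)⟧) _ (fun i a ha f => membL (Q⟦(-1 : ℤ)⟧) i a ha f)
        (fun f => hFb _ (hKL _) f) (𝟙 _)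
    have hF : Q⟦(-1 : ℤ)⟧ ∈ triangulatedClosure (⋃ i, A i) :=
      genL (Q⟦(-1 : ℤ)⟧) _ hTS (fun i => hsub i.rev)
        (hTS.zero _ ((IsZero.iff_id_eq_zero _).2 hidz))
    refine ⟨Q⟦(-1 : ℤ)⟧, hF, (Triangle.mk (adjLG.unit.app T) v w).invRotate.mor₁, ?_⟩
    intro x hx
    constructor
    · intro g₁ g₂ hgg
      have hgg' : g₁ ≫ (Triangle.mk (adjLG.unit.app T) v w).invRotate.mor₁ =
          g₂ ≫ (Triangle.mk (adjLG.unit.app T) v w).invRotate.mor₁ := hgg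
      have hker : ∀ g : x ⟶ Q⟦(-1 : ℤ)⟧,
          g ≫ (Triangle.mk (adjLG.unit.app T) v w).invRotate.mor₁ = 0 → g = 0 := by
        intro g hg0
        obtain ⟨h, hh⟩ := Triangle.coyoneda_exact₂ _
          (inv_rot_of_distTriang _ (inv_rot_of_distTriang _ hTri)) g hg0
        have hhz : h = 0 := hrOs (LG.obj T).property (-1) x hx h
        rw [hh, hhz]
        exact zero_comp
      have hs := hker (g₁ - g₂) (Preadditive.sub_comp _ _ _ |>.trans (sub_eq_zero.2 hgg'))
      exact sub_eq_zero.1 hs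
    · intro f
      have h0 : f ≫ (Triangle.mk (adjLG.unit.app T) v w).invRotate.mor₂ = 0 :=
        (LG.obj T).property x hx _
      obtain ⟨g, hg⟩ := Triangle.coyoneda_exact₂ _ (inv_rot_of_distTriang _ hTri) f h0
      exact ⟨g, hg.symm⟩
  choose FG hFG uG hbijG using keyG
  have admR : RightAdmissible (triangulatedClosure (⋃ i, A i)) := by
    have he : ∀ (x' x : C) (hx' : x' ∈ triangulatedClosure (⋃ i, A i))
        (hx : x ∈ triangulatedClosure (⋃ i, A i)) (T : C) (f : x' ⟶ x) (g : x ⟶ T),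
        (Equiv.ofBijective (fun k : x' ⟶ FG T => k ≫ uG T) (hbijG T x' hx')).symm (f ≫ g) =
          f ≫ (Equiv.ofBijective (fun k : x ⟶ FG T => k ≫ uG T) (hbijG T x hx)).symm g := by
      intro x' x hx' hx T f g
      have h2 : (Equiv.ofBijective (fun k : x ⟶ FG T => k ≫ uG T) (hbijG T x hx)).symm g ≫
          uG T = g :=
        Equiv.ofBijective_apply_symm_apply (fun k : x ⟶ FG T => k ≫ uG T) (hbijG T x hx) g
      rw [Equiv.symm_apply_eq]
      show f ≫ g = (f ≫ (Equiv.ofBijective (fun k : x ⟶ FG T => k ≫ uG T)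
        (hbijG T x hx)).symm g) ≫ uG T
      rw [Category.assoc, h2]
    exact ⟨⟨_, ⟨Adjunction.adjunctionOfEquivRight
      (G_obj := fun T => ⟨FG T, hFG T⟩)
      (fun X T => (Equiv.ofBijective (fun k : X.obj ⟶ FG T => k ≫ uG T)
        (hbijG T X.obj X.property)).symm.trans (fullSubHomEquiv X ⟨FG T, hFG T⟩).symm)
      (fun X' X T (f : X' ⟶ X) g => ObjectProperty.hom_ext _
        (he X'.obj X.obj X'.property X.property T (InducedCategory.Hom.hom f) g))⟩⟩⟩
  -- Left admissibility : a left adjoint to the inclusion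
  have keyP : ∀ T : C, ∃ (PT : C) (_ : PT ∈ triangulatedClosure (⋃ i, A i)) (u : T ⟶ PT),
      ∀ x ∈ triangulatedClosure (⋃ i, A i),
        Function.Bijective (fun g : PT ⟶ x => u ≫ g) := by
    intro T
    obtain ⟨Q, v, w, hTri⟩ := distinguished_cocone_triangle (adjRG.counit.app T)
    have hQb : ∀ b ∈ leftOrth (triangulatedClosure (⋃ i, A i)), ∀ f : b ⟶ Q, f = 0 :=
      fun b hb f => QpropR hlOs adjRG T hTri hb f
    have hidz : 𝟙 ((composeAll (fun i => R i ⋙ incl (leftOrth (A i)))).obj Q) = 0 :=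
      orthR Q _ (fun i a ha f => membR Q i a ha f) (fun f => hQb _ (hKR Q) f) (𝟙 _)
    have hQS : Q ∈ triangulatedClosure (⋃ i, A i) :=
      genR Q _ hTS hsub (hTS.zero _ ((IsZero.iff_id_eq_zero _).2 hidz))
    refine ⟨Q, hQS, v, ?_⟩
    intro x hx
    constructor
    · intro g₁ g₂ hgg
      have hgg' : v ≫ g₁ = v ≫ g₂ := hgg
      have hker : ∀ g : Q ⟶ x, v ≫ g = 0 → g = 0 := by
        intro g hg0
        obtain ⟨h, hh⟩ := Triangle.yoneda_exact₃ _ hTri g hg0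
        rw [hh, hlOs (RG.obj T).property 1 x hx h]
        exact comp_zero
      have hs := hker (g₁ - g₂) (by rw [Preadditive.comp_sub, hgg', sub_self])
      exact sub_eq_zero.1 hs
    · intro f
      have h0 : adjRG.counit.app T ≫ f = 0 := (RG.obj T).property x hx _
      obtain ⟨g, hg⟩ := Triangle.yoneda_exact₂ _ hTri f h0
      exact ⟨g, hg.symm⟩
  choose PG hPG uP hbijP using keyP
  have admL : LeftAdmissible (triangulatedClosure (⋃ i, A i)) := by
    have he : ∀ (T : C) (y y' : C) (hy : y ∈ triangulatedClosure (⋃ i, A i))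
        (hy' : y' ∈ triangulatedClosure (⋃ i, A i)) (g : y ⟶ y') (h : PG T ⟶ y),
        Equiv.ofBijective (fun k : PG T ⟶ y' => uP T ≫ k) (hbijP T y' hy') (h ≫ g) =
          Equiv.ofBijective (fun k : PG T ⟶ y => uP T ≫ k) (hbijP T y hy) h ≫ g := by
      intro T y y' hy hy' g h
      show uP T ≫ (h ≫ g) = (uP T ≫ h) ≫ g
      rw [Category.assoc]
    exact ⟨⟨_, ⟨Adjunction.adjunctionOfEquivLeft
      (G := incl (triangulatedClosure (⋃ i, A i)))
      (F_obj := fun T => ⟨PG T, hPG T⟩)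
      (fun T X => (fullSubHomEquiv ⟨PG T, hPG T⟩ X).trans
          (Equiv.ofBijective (fun k : PG T ⟶ X.obj => uP T ≫ k)
          (hbijP T X.obj X.property)))
      (fun T X X' g h => he T X.obj X'.obj X.property X'.property g.hom h.hom)⟩⟩⟩
  -- the natural isomorphism for the right mutations
  have hbRG : ∀ T : C, ∀ i, (incl (leftOrth (triangulatedClosure (⋃ i, A i)))).obj (RG.obj T)
      ∈ leftOrth (A i) :=
    fun T i a ha f => (RG.obj T).property a (hsub i ha) f
  have hbKR : ∀ T : C, ∀ i, (composeAll (fun i => R i ⋙ incl (leftOrth (A i)))).obj T ∈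
      leftOrth (A i) := fun T i a ha f => membR T i a ha f
  have isoR : Nonempty ((RG ⋙ incl (leftOrth (triangulatedClosure (⋃ i, A i)))) ≅
      composeAll (fun i => R i ⋙ incl (leftOrth (A i)))) := by
    let φ : ∀ T : C, (incl (leftOrth (triangulatedClosure (⋃ i, A i)))).obj (RG.obj T) ⟶
        (composeAll (fun i => R i ⋙ incl (leftOrth (A i)))).obj T :=
      fun T => (Equiv.ofBijective _ (bijR T _ (hbRG T))).symm (adjRG.counit.app T)
    have hφ : ∀ T, φ T ≫ ε.app T = adjRG.counit.app T :=
      fun T => (Equiv.ofBijective _ (bijR T _ (hbRG T))).apply_symm_apply _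
    let ψ : ∀ T : C, (composeAll (fun i => R i ⋙ incl (leftOrth (A i)))).obj T ⟶
        (incl (leftOrth (triangulatedClosure (⋃ i, A i)))).obj (RG.obj T) :=
      fun T => (Equiv.ofBijective _ (postcomp_counit_bij adjRG T (hKR T))).symm (ε.app T)
    have hψ : ∀ T, ψ T ≫ adjRG.counit.app T = ε.app T :=
      fun T => (Equiv.ofBijective _ (postcomp_counit_bij adjRG T (hKR T))).apply_symm_apply _
    refine ⟨NatIso.ofComponents (fun T =>
      { hom := φ T
        inv := ψ T
        hom_inv_id := by
          apply (postcomp_counit_bij adjRG T (RG.obj T).property).injective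
          show (φ T ≫ ψ T) ≫ adjRG.counit.app T = 𝟙 _ ≫ adjRG.counit.app T
          rw [Category.assoc, hψ T, hφ T, Category.id_comp]
        inv_hom_id := by
          apply (bijR T _ (hbKR T)).injective
          show (ψ T ≫ φ T) ≫ ε.app T = 𝟙 _ ≫ ε.app T
          rw [Category.assoc, hφ T, hψ T, Category.id_comp] }) ?_⟩
    intro T T' f
    have hnat1 : (composeAll (fun i => R i ⋙ incl (leftOrth (A i)))).map f ≫ ε.app T' =
        ε.app T ≫ f := by simpa using ε.naturality f
    have hnat2 : (RG ⋙ incl (leftOrth (triangulatedClosure (⋃ i, A i)))).map f ≫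
        adjRG.counit.app T' = adjRG.counit.app T ≫ f := by
      simpa using adjRG.counit.naturality f
    apply (bijR T' _ (hbRG T)).injective
    show ((RG ⋙ incl (leftOrth (triangulatedClosure (⋃ i, A i)))).map f ≫ φ T') ≫ ε.app T' =
      (φ T ≫ (composeAll (fun i => R i ⋙ incl (leftOrth (A i)))).map f) ≫ ε.app T'
    rw [Category.assoc, hφ T', hnat2, Category.assoc, hnat1, ← Category.assoc, hφ T]
  -- the natural isomorphism for the left mutations
  have hbLG : ∀ T : C, ∀ i,
      (incl (rightOrth (triangulatedClosure (⋃ i, A i)))).obj (LG.obj T) ∈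
        rightOrth (A (Fin.rev i)) :=
    fun T i a ha f => (LG.obj T).property a (hsub i.rev ha) f
  have hbKL : ∀ T : C, ∀ i,
      (composeAll (fun i => L i.rev ⋙ incl (rightOrth (A i.rev)))).obj T ∈
        rightOrth (A (Fin.rev i)) := fun T i a ha f => membL T i a ha f
  have isoL : Nonempty ((LG ⋙ incl (rightOrth (triangulatedClosure (⋃ i, A i)))) ≅
      composeAll (fun i => L i.rev ⋙ incl (rightOrth (A i.rev)))) := by
    let φ : ∀ T : C, (incl (rightOrth (triangulatedClosure (⋃ i, A i)))).obj (LG.obj T) ⟶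
        (composeAll (fun i => L i.rev ⋙ incl (rightOrth (A i.rev)))).obj T :=
      fun T => (Equiv.ofBijective _ (precomp_unit_bij adjLG T (hKL T))).symm (η.app T)
    have hφ : ∀ T, adjLG.unit.app T ≫ φ T = η.app T :=
      fun T => (Equiv.ofBijective _ (precomp_unit_bij adjLG T (hKL T))).apply_symm_apply _
    let ψ : ∀ T : C, (composeAll (fun i => L i.rev ⋙ incl (rightOrth (A i.rev)))).obj T ⟶
        (incl (rightOrth (triangulatedClosure (⋃ i, A i)))).obj (LG.obj T) :=
      fun T => (Equiv.ofBijective _ (bijL T _ (hbLG T))).symm (adjLG.unit.app T)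
    have hψ : ∀ T, η.app T ≫ ψ T = adjLG.unit.app T :=
      fun T => (Equiv.ofBijective _ (bijL T _ (hbLG T))).apply_symm_apply _
    refine ⟨NatIso.ofComponents (fun T =>
      { hom := φ T
        inv := ψ T
        hom_inv_id := by
          apply (precomp_unit_bij adjLG T (LG.obj T).property).injective
          show adjLG.unit.app T ≫ (φ T ≫ ψ T) = adjLG.unit.app T ≫ 𝟙 _
          rw [← Category.assoc, hφ T, hψ T, Category.comp_id]
        inv_hom_id := by
          apply (bijL T _ (hbKL T)).injective
          show η.app T ≫ (ψ T ≫ φ T) = η.app T ≫ 𝟙 _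
          rw [← Category.assoc, hψ T, hφ T, Category.comp_id] }) ?_⟩
    intro T T' f
    have hnat1 : η.app T ≫
        (composeAll (fun i => L i.rev ⋙ incl (rightOrth (A i.rev)))).map f =
        f ≫ η.app T' := by simpa using (η.naturality f).symm
    have hnat2 : adjLG.unit.app T ≫
        (LG ⋙ incl (rightOrth (triangulatedClosure (⋃ i, A i)))).map f =
        f ≫ adjLG.unit.app T' := by simpa using (adjLG.unit.naturality f).symm
    apply (precomp_unit_bij adjLG T (hKL T')).injective
    show adjLG.unit.app T ≫
        ((LG ⋙ incl (rightOrth (triangulatedClosure (⋃ i, A i)))).map f ≫ φ T') =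
      adjLG.unit.app T ≫ (φ T ≫
        (composeAll (fun i => L i.rev ⋙ incl (rightOrth (A i.rev)))).map f)
    rw [← Category.assoc, hnat2, Category.assoc, hφ T', ← Category.assoc, hφ T, hnat1]
  exact ⟨⟨admR, admL⟩, isoR, isoL⟩

end HPD
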